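/- For all q, n ≥ 1, Σ_{d ∥ q} |c̃_d(n)| ≤ 2^{ω(q)} · n. -/

import Mathlib

def uDivisors (n : ℕ) : Finset ℕ := n.divisors.filter (fun d => Nat.gcd d (n / d) = 1)

def mustar (n : ℕ) : ℤ := (-1) ^ n.primeFactors.card

def gcud (n q : ℕ) : ℕ := (uDivisors n ∩ uDivisors q).sup id

def ctilde (q n : ℕ) : ℤ := ∑ d ∈ uDivisors (gcud n q), (d : ℤ) * mustar (q / d)

lemma mem_uDivisors {e n : ℕ} : e ∈ uDivisors n ↔ e ∣ n ∧ Nat.gcd e (n / e) = 1 ∧ n ≠ 0 := by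
  simp [uDivisors, Nat.mem_divisors]; tauto

lemma uDivisors_split {p a h : ℕ} (hp : p.Prime) (ha : 0 < a) (hph : ¬ p ∣ h) (hh : 0 < h) :
    uDivisors (p ^ a * h) = uDivisors h ∪ (uDivisors h).image (p ^ a * ·) := by
  have hpa : 0 < p ^ a := pow_pos hp.pos a
  ext e
  simp only [Finset.mem_union, Finset.mem_image, mem_uDivisors]
  constructor
  · rintro ⟨hdvd, hgcd, -⟩
    set k := (p ^ a * h) / e with hkdef
    have hk : e * k = p ^ a * h := Nat.mul_div_cancel' hdvd
    by_cases hpe : p ∣ e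
    · right
      have hpk : ¬ p ∣ k := by
        intro hpk
        have h1 : p ∣ Nat.gcd e k := Nat.dvd_gcd hpe hpk
        rw [hgcd] at h1
        exact hp.one_lt.ne' (Nat.eq_one_of_dvd_one h1 ▸ rfl)
      have hcop : Nat.Coprime (p ^ a) k := Nat.Coprime.pow_left _ ((Nat.Prime.coprime_iff_not_dvd hp).2 hpk)
      have hpa_e : p ^ a ∣ e :=
        Nat.Coprime.dvd_of_dvd_mul_right hcop (hk ▸ Dvd.intro h rfl)
      obtain ⟨e', he'⟩ := hpa_e
      have hek : e' * k = h := by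
        have : p ^ a * (e' * k) = p ^ a * h := by rw [← hk, he']; ring
        exact Nat.eq_of_mul_eq_mul_left hpa this
      have he'pos : 0 < e' := by
        rcases Nat.eq_zero_or_pos e' with h0 | h0
        · rw [h0, zero_mul] at hek; omega
        · exact h0
      have hhe' : h / e' = k := by rw [← hek, Nat.mul_div_cancel_left _ he'pos]
      refine ⟨e', ⟨Dvd.intro k hek, ?_, hh.ne'⟩, he'.symm⟩
      rw [hhe']
      have hd : Nat.gcd e' k ∣ Nat.gcd e k :=
        Nat.dvd_gcd ((Nat.gcd_dvd_left e' k).trans ⟨p ^ a, by rw [he']; ring⟩) (Nat.gcd_dvd_right e' k)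
      rw [hgcd] at hd
      exact Nat.eq_one_of_dvd_one hd
    · left
      have hcop : Nat.Coprime e (p ^ a) :=
        Nat.Coprime.pow_right _ (((Nat.Prime.coprime_iff_not_dvd hp).2 hpe).symm)
      have hdvd' : e ∣ h * p ^ a := by rwa [mul_comm] at hdvd
      have heh : e ∣ h := hcop.dvd_of_dvd_mul_right hdvd'
      refine ⟨heh, ?_, hh.ne'⟩
      have hdk : h / e ∣ k := by
        obtain ⟨c, hc⟩ := heh
        have hepos : 0 < e := Nat.pos_of_dvd_of_pos ⟨c, hc⟩ hh
        have h1 : h / e = c := by rw [hc, Nat.mul_div_cancel_left _ hepos]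
        have h2 : k = p ^ a * c := by
          have : e * k = e * (p ^ a * c) := by rw [hk, hc]; ring
          exact Nat.eq_of_mul_eq_mul_left hepos this
        rw [h1, h2]; exact Dvd.intro_left _ rfl
      have hd : Nat.gcd e (h / e) ∣ Nat.gcd e k := Nat.dvd_gcd (Nat.gcd_dvd_left _ _) ((Nat.gcd_dvd_right _ _).trans hdk)
      rw [hgcd] at hd
      exact Nat.eq_one_of_dvd_one hd
  · rintro (⟨hdvd, hgcd, -⟩ | ⟨e', ⟨hdvd, hgcd, -⟩, rfl⟩)
    · have hepos : 0 < e := Nat.pos_of_dvd_of_pos hdvd hh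
      have hkey : (p ^ a * h) / e = p ^ a * (h / e) := by
        rw [Nat.mul_div_assoc _ hdvd]
      refine ⟨hdvd.mul_left _, ?_, by positivity⟩
      rw [hkey]
      have hcop1 : Nat.Coprime e (p ^ a) :=
        Nat.Coprime.pow_right _ (((Nat.Prime.coprime_iff_not_dvd hp).2 (fun hc => hph (hc.trans hdvd))).symm)
      exact Nat.Coprime.mul_right hcop1 hgcd
    · have hepos : 0 < e' := Nat.pos_of_dvd_of_pos hdvd hh
      have hkey : (p ^ a * h) / (p ^ a * e') = h / e' := by
        rw [Nat.mul_div_mul_left _ _ hpa]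
      refine ⟨mul_dvd_mul_left _ hdvd, ?_, by positivity⟩
      rw [hkey]
      have hph' : ¬ p ∣ (h / e') := fun hc => hph (hc.trans (Nat.div_dvd_of_dvd hdvd))
      have hcop1 : Nat.Coprime (p ^ a) (h / e') :=
        Nat.Coprime.pow_left _ ((Nat.Prime.coprime_iff_not_dvd hp).2 hph')
      exact Nat.Coprime.mul hcop1 hgcd

lemma uDivisors_disj {p a h : ℕ} (hp : p.Prime) (ha : 0 < a) (hph : ¬ p ∣ h) :
    Disjoint (uDivisors h) ((uDivisors h).image (p ^ a * ·)) := by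
  rw [Finset.disjoint_left]
  rintro e he hei
  simp only [Finset.mem_image] at hei
  obtain ⟨e', -, rfl⟩ := hei
  have : p ∣ h := (dvd_pow_self p ha.ne' |>.trans (Dvd.intro e' rfl)).trans (mem_uDivisors.1 he).1
  exact hph this




lemma primeFactors_card_mul {p a y : ℕ} (hp : p.Prime) (ha : 0 < a) (hpy : ¬ p ∣ y) (hy : 0 < y) :
    (p ^ a * y).primeFactors.card = y.primeFactors.card + 1 := by
  rw [Nat.primeFactors_mul (pow_ne_zero a hp.pos.ne') hy.ne',
    Nat.primeFactors_pow _ ha.ne', Nat.Prime.primeFactors hp]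
  rw [← Finset.insert_eq, Finset.card_insert_of_notMem (fun hc => hpy (Nat.mem_primeFactors.1 hc).2.1)]

lemma mustar_flip {p a y : ℕ} (hp : p.Prime) (ha : 0 < a) (hpy : ¬ p ∣ y) (hy : 0 < y) :
    mustar (p ^ a * y) = - mustar y := by
  unfold mustar
  rw [primeFactors_card_mul hp ha hpy hy, pow_succ]
  ring

lemma uDivisors_trans {a b c : ℕ} (hab : a ∈ uDivisors b) (hbc : b ∈ uDivisors c) :
    a ∈ uDivisors c := by
  obtain ⟨hab1, hab2, hb0⟩ := mem_uDivisors.1 hab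
  obtain ⟨hbc1, hbc2, hc0⟩ := mem_uDivisors.1 hbc
  have hbpos : 0 < b := Nat.pos_of_ne_zero hb0
  have hapos : 0 < a := Nat.pos_of_dvd_of_pos hab1 hbpos
  refine mem_uDivisors.2 ⟨hab1.trans hbc1, ?_, hc0⟩
  obtain ⟨k, hk⟩ := hab1
  obtain ⟨m, hm⟩ := hbc1
  have h1 : c / a = k * m := by
    rw [hm, hk]; rw [mul_assoc, Nat.mul_div_cancel_left _ hapos]
  have h2 : b / a = k := by rw [hk, Nat.mul_div_cancel_left _ hapos]
  have h3 : c / b = m := by rw [hm, Nat.mul_div_cancel_left _ hbpos]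
  rw [h1]
  have hcop1 : Nat.Coprime a k := by rwa [h2] at hab2
  have hcop2 : Nat.Coprime a m := by
    have : Nat.gcd a m ∣ Nat.gcd b m := Nat.dvd_gcd ((Nat.gcd_dvd_left a m).trans ⟨k, hk⟩) (Nat.gcd_dvd_right a m)
    rw [h3] at hbc2
    rw [hbc2] at this
    exact Nat.eq_one_of_dvd_one this
  exact Nat.Coprime.mul_right hcop1 hcop2

lemma self_mem_uDivisors {n : ℕ} (hn : 0 < n) : n ∈ uDivisors n :=
  mem_uDivisors.2 ⟨dvd_rfl, by simp [Nat.div_self hn], hn.ne'⟩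

lemma one_mem_uDivisors {n : ℕ} (hn : 0 < n) : (1:ℕ) ∈ uDivisors n :=
  mem_uDivisors.2 ⟨one_dvd n, by simp, hn.ne'⟩

lemma uDivisors_one' : uDivisors 1 = {1} := by decide

lemma abs_f_le (d : ℕ) : ∀ g, g ∈ uDivisors d →
    |∑ e ∈ uDivisors g, (e:ℤ) * mustar (d / e)| ≤ (g:ℤ) := by
  intro g
  induction g using Nat.strong_induction_on with
  | _ g ih =>
    intro hg
    obtain ⟨hgd, hgcdg, hd0⟩ := mem_uDivisors.1 hg
    have hdpos : 0 < d := Nat.pos_of_ne_zero hd0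
    have hgpos : 0 < g := Nat.pos_of_dvd_of_pos hgd hdpos
    rcases eq_or_lt_of_le (show 1 ≤ g from hgpos) with h1 | h1
    · rw [show g = 1 from h1.symm]
      rw [uDivisors_one']
      simp [mustar, abs_pow]
    · set p := g.minFac with hpdef
      have hp : p.Prime := Nat.minFac_prime (by omega)
      have hpg : p ∣ g := Nat.minFac_dvd g
      set a := g.factorization p with hadef
      have ha : 0 < a := hp.factorization_pos_of_dvd hgpos.ne' hpg
      set h := g / p ^ a with hhdef
      have hph : ¬ p ∣ h := Nat.not_dvd_ordCompl hp hgpos.ne'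
      have hgph : p ^ a * h = g := Nat.ordProj_mul_ordCompl_eq_self g p
      have hhpos : 0 < h := Nat.ordCompl_pos p hgpos.ne'
      have hpa1 : 1 < p ^ a := Nat.one_lt_pow ha.ne' hp.one_lt
      have hhlt : h < g := Nat.div_lt_self hgpos hpa1
      have hcophp : Nat.Coprime h (p ^ a) :=
        Nat.Coprime.pow_right _ (((hp.coprime_iff_not_dvd).2 hph).symm)
      have hmem_h : h ∈ uDivisors g := by
        refine mem_uDivisors.2 ⟨⟨p ^ a, by rw [← hgph]; ring⟩, ?_, hgpos.ne'⟩
        have : g / h = p ^ a := by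
          rw [← hgph, Nat.mul_div_cancel _ hhpos]
        rw [this]; exact hcophp
      have hmemhd : h ∈ uDivisors d := uDivisors_trans hmem_h hg
      have hsplit := uDivisors_split hp ha hph hhpos
      have hdisj := uDivisors_disj (h := h) (a := a) hp ha hph
      have hinj : ∀ x ∈ uDivisors h, ∀ y ∈ uDivisors h, p ^ a * x = p ^ a * y → x = y :=
        fun x _ y _ hxy => Nat.eq_of_mul_eq_mul_left (pow_pos hp.pos a) hxy
      have hterm : ∀ e ∈ uDivisors h,
          ((p ^ a * e : ℕ) : ℤ) * mustar (d / (p ^ a * e)) =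
          -((p:ℤ) ^ a) * ((e:ℤ) * mustar (d / e)) := by
        intro e he
        have hepos : 0 < e := Nat.pos_of_dvd_of_pos (mem_uDivisors.1 he).1 hhpos
        have hpeg : p ^ a * e ∈ uDivisors g := by
          rw [← hgph, hsplit]
          exact Finset.mem_union_right _ (Finset.mem_image_of_mem _ he)
        have hped := uDivisors_trans hpeg hg
        obtain ⟨hdvd', hgcd', -⟩ := mem_uDivisors.1 hped
        set y := d / (p ^ a * e) with hydef
        have hy : (p ^ a * e) * y = d := Nat.mul_div_cancel' hdvd'
        have hypos : 0 < y := by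
          rcases Nat.eq_zero_or_pos y with h0 | h0
          · rw [h0, mul_zero] at hy; omega
          · exact h0
        have hpy : ¬ p ∣ y := by
          intro hc
          have hd1 : p ∣ Nat.gcd (p ^ a * e) y :=
            Nat.dvd_gcd (Dvd.dvd.mul_right (dvd_pow_self p ha.ne') e) hc
          rw [hgcd'] at hd1
          exact hp.one_lt.ne' (Nat.eq_one_of_dvd_one hd1 ▸ rfl)
        have hde : d / e = p ^ a * y := by
          have hd2 : d = e * (p ^ a * y) := by rw [← hy]; ring
          rw [hd2, Nat.mul_div_cancel_left _ hepos]
        rw [hde, mustar_flip hp ha hpy hypos]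
        push_cast
        ring
      have hS := ih h hhlt hmemhd
      calc |∑ e ∈ uDivisors g, (e:ℤ) * mustar (d / e)|
          = |(1 - (p:ℤ) ^ a) * ∑ e ∈ uDivisors h, (e:ℤ) * mustar (d / e)| := by
            rw [← hgph, hsplit, Finset.sum_union hdisj, Finset.sum_image hinj,
              Finset.sum_congr rfl hterm, ← Finset.mul_sum]
            congr 1
            ring
        _ = ((p:ℤ) ^ a - 1) * |∑ e ∈ uDivisors h, (e:ℤ) * mustar (d / e)| := by
            have hcast : (1:ℤ) < (p:ℤ) ^ a := by exact_mod_cast hpa1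
            rw [abs_mul, abs_of_nonpos (by linarith), neg_sub]
        _ ≤ ((p:ℤ) ^ a - 1) * (h:ℤ) := by
            apply mul_le_mul_of_nonneg_left hS
            have : (1:ℤ) < (p:ℤ) ^ a := by exact_mod_cast hpa1
            linarith
        _ ≤ (g:ℤ) := by
            have hg' : ((p ^ a * h : ℕ) : ℤ) = (g:ℤ) := by rw [hgph]
            push_cast at hg'
            have hh0 : (0:ℤ) ≤ (h:ℤ) := by positivity
            nlinarith [hh0]

lemma card_uDivisors : ∀ g : ℕ, 0 < g → (uDivisors g).card = 2 ^ g.primeFactors.card := by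
  intro g
  induction g using Nat.strong_induction_on with
  | _ g ih =>
    intro hgpos
    rcases eq_or_lt_of_le (show 1 ≤ g from hgpos) with h1 | h1
    · rw [show g = 1 from h1.symm, uDivisors_one']
      simp
    · set p := g.minFac with hpdef
      have hp : p.Prime := Nat.minFac_prime (by omega)
      have hpg : p ∣ g := Nat.minFac_dvd g
      set a := g.factorization p with hadef
      have ha : 0 < a := hp.factorization_pos_of_dvd hgpos.ne' hpg
      set h := g / p ^ a with hhdef
      have hph : ¬ p ∣ h := Nat.not_dvd_ordCompl hp hgpos.ne'
      have hgph : p ^ a * h = g := Nat.ordProj_mul_ordCompl_eq_self g p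
      have hhpos : 0 < h := Nat.ordCompl_pos p hgpos.ne'
      have hpa1 : 1 < p ^ a := Nat.one_lt_pow ha.ne' hp.one_lt
      have hhlt : h < g := Nat.div_lt_self hgpos hpa1
      have hsplit := uDivisors_split hp ha hph hhpos
      have hdisj := uDivisors_disj (h := h) (a := a) hp ha hph
      rw [← hgph, hsplit, Finset.card_union_of_disjoint hdisj,
        Finset.card_image_of_injective _ (fun x y hxy => Nat.eq_of_mul_eq_mul_left (pow_pos hp.pos a) hxy),
        ih h hhlt hhpos, primeFactors_card_mul hp ha hph hhpos]
      ring

lemma gcud_mem {n q : ℕ} (hn : 0 < n) (hq : 0 < q) :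
    gcud n q ∈ uDivisors n ∩ uDivisors q := by
  have h1 : (1:ℕ) ∈ uDivisors n ∩ uDivisors q :=
    Finset.mem_inter.2 ⟨one_mem_uDivisors hn, one_mem_uDivisors hq⟩
  obtain ⟨b, hb, hbe⟩ := Finset.exists_mem_eq_sup _ ⟨1, h1⟩ id
  rw [gcud, hbe]
  exact hb

theorem sum_abs_ctilde_le (q n : ℕ) (hq : 0 < q) (hn : 0 < n) :
    ∑ d ∈ uDivisors q, |ctilde d n| ≤ 2 ^ q.primeFactors.card * (n : ℤ) := by
  have hbound : ∀ d ∈ uDivisors q, |ctilde d n| ≤ (n : ℤ) := by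
    intro d hd
    have hdpos : 0 < d := Nat.pos_of_dvd_of_pos (mem_uDivisors.1 hd).1 hq
    have hmem := gcud_mem hn hdpos
    have hmem1 : gcud n d ∈ uDivisors n := (Finset.mem_inter.1 hmem).1
    have hmem2 : gcud n d ∈ uDivisors d := (Finset.mem_inter.1 hmem).2
    have h1 : |ctilde d n| ≤ (gcud n d : ℤ) := abs_f_le d _ hmem2
    have h2 : (gcud n d : ℤ) ≤ (n : ℤ) := by
      exact_mod_cast Nat.le_of_dvd hn (mem_uDivisors.1 hmem1).1
    exact h1.trans h2
  calc ∑ d ∈ uDivisors q, |ctilde d n| ≤ ∑ _d ∈ uDivisors q, (n : ℤ) :=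
        Finset.sum_le_sum hbound
    _ = (uDivisors q).card * (n : ℤ) := by rw [Finset.sum_const, nsmul_eq_mul]
    _ = 2 ^ q.primeFactors.card * (n : ℤ) := by rw [card_uDivisors q hq]; push_cast; ring
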